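/- Let B ∈ C²((0, +∞)) ∩ C¹([0, +∞)) satisfy B(0) = B'(0) = 0 and B(t), B'(t), B''(t) > 0 for t > 0. (i) If B satisfies the inequalities of (A)' with constants p > 1, κ̄ ∈ [0,1), γ̄, Γ̄ > 0, then B'(t) t − B(t) ≥ (γ̄/Γ̄) B(t) for every t ≥ 0. (ii) If instead B satisfies (B)' (i.e. B ∈ C³_loc([0,+∞)) with B''(0) > 0 and B'''(0) = 0), then for every K > 0 there exists δ > 0 such that B'(t) t − B(t) ≥ δ B(t) for every t ∈ [0, K]. -/

import Mathlib

noncomputable section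

open Set

private lemma mono_aux {f : ℝ → ℝ} {a b : ℝ} (hab : a ≤ b)
    (hc : ContinuousOn f (Set.Icc a b))
    (hd : ∀ x ∈ Set.Ioo a b, ∃ f', 0 ≤ f' ∧ HasDerivAt f f' x) : f a ≤ f b := by
  have hdiff : DifferentiableOn ℝ f (interior (Set.Icc a b)) := by
    rw [interior_Icc]
    intro x hx
    obtain ⟨f', _, hf'⟩ := hd x hx
    exact hf'.differentiableAt.differentiableWithinAt
  have hmono := monotoneOn_of_deriv_nonneg (convex_Icc a b) hc hdiff ?_
  · exact hmono (Set.left_mem_Icc.2 hab) (Set.right_mem_Icc.2 hab) hab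
  · intro x hx
    rw [interior_Icc] at hx
    obtain ⟨f', h0, hf'⟩ := hd x hx
    rw [hf'.deriv]; exact h0

theorem coercivity_inequality (B : ℝ → ℝ)
    (hB2 : ContDiffOn ℝ 2 B (Set.Ioi 0)) (hB1 : ContDiffOn ℝ 1 B (Set.Ici 0))
    (hB0 : B 0 = 0) (hB'0 : derivWithin B (Set.Ici 0) 0 = 0)
    (hBpos : ∀ t : ℝ, 0 < t → 0 < B t ∧ 0 < deriv B t ∧ 0 < deriv (deriv B) t) :
    (∀ p κ γ Γ : ℝ, 1 < p → κ ∈ Set.Ico (0 : ℝ) 1 → 0 < γ → 0 < Γ →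
      (∀ t : ℝ, 0 < t →
        γ * (κ + t) ^ (p - 2) * t ≤ deriv B t ∧ deriv B t ≤ Γ * (κ + t) ^ (p - 2) * t ∧
        γ * (κ + t) ^ (p - 2) ≤ deriv (deriv B) t ∧ deriv (deriv B) t ≤ Γ * (κ + t) ^ (p - 2)) →
      ∀ t : ℝ, 0 ≤ t → γ / Γ * B t ≤ deriv B t * t - B t) ∧
    ((ContDiffOn ℝ 3 B (Set.Ici 0) ∧ 0 < iteratedDerivWithin 2 B (Set.Ici 0) 0 ∧
        iteratedDerivWithin 3 B (Set.Ici 0) 0 = 0) →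
      ∀ K : ℝ, 0 < K → ∃ δ : ℝ, 0 < δ ∧
        ∀ t ∈ Set.Icc (0 : ℝ) K, δ * B t ≤ deriv B t * t - B t) := by
  have hBc : ContinuousOn B (Set.Ici 0) := hB1.continuousOn
  have hIoiIci : Set.Ioi (0:ℝ) ⊆ Set.Ici 0 := Set.Ioi_subset_Ici_self
  have hDB : ∀ u : ℝ, 0 < u → HasDerivAt B (deriv B u) u := by
    intro u hu
    exact ((hB2.differentiableOn (by norm_num)).differentiableAt
      (isOpen_Ioi.mem_nhds hu)).hasDerivAt
  have hD1 : ContDiffOn ℝ 1 (deriv B) (Set.Ioi 0) := by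
    apply (hB2.derivWithin (uniqueDiffOn_Ioi 0) (by norm_num)).congr
    intro x hx
    exact (derivWithin_of_mem_nhds (isOpen_Ioi.mem_nhds hx)).symm
  have hDc : ContinuousOn (deriv B) (Set.Ioi 0) := hD1.continuousOn
  have hDD : ∀ u : ℝ, 0 < u → HasDerivAt (deriv B) (deriv (deriv B) u) u := by
    intro u hu
    exact ((hD1.differentiableOn one_ne_zero).differentiableAt
      (isOpen_Ioi.mem_nhds hu)).hasDerivAt
  -- monotonicity of h(t) = B'(t) t - (1+r) B(t) on (0,∞) given r * B' ≤ t * B''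
  have keygen : ∀ r : ℝ, (∀ x : ℝ, 0 < x → r * deriv B x ≤ x * deriv (deriv B) x) →
      ∀ s t : ℝ, 0 < s → s ≤ t →
      deriv B s * s - (1 + r) * B s ≤ deriv B t * t - (1 + r) * B t := by
    intro r hr s t hs hst
    apply mono_aux hst
    · have hsub : Set.Icc s t ⊆ Set.Ioi 0 := fun x hx => hs.trans_le hx.1
      exact ((hDc.mono hsub).mul continuousOn_id).sub
        (continuousOn_const.mul (hBc.mono fun x hx => (hs.trans_le hx.1).le))
    · intro x hx
      have hx0 : 0 < x := hs.trans hx.1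
      refine ⟨deriv (deriv B) x * x + deriv B x * 1 - (1 + r) * deriv B x, ?_, ?_⟩
      · have := hr x hx0
        nlinarith
      · exact (((hDD x hx0).mul (hasDerivAt_id x)).sub ((hDB x hx0).const_mul (1 + r)))
  have hBlim : Filter.Tendsto B (nhdsWithin 0 (Set.Ioi 0)) (nhds 0) := by
    have h1 : ContinuousWithinAt B (Set.Ici 0) 0 := hBc 0 Set.self_mem_Ici
    have h2 := h1.mono hIoiIci
    simpa [ContinuousWithinAt, hB0] using h2
  -- from the monotonicity, positivity near 0 gives the inequality at t
  have keylim : ∀ r : ℝ, 0 ≤ r →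
      (∀ x : ℝ, 0 < x → r * deriv B x ≤ x * deriv (deriv B) x) →
      ∀ t : ℝ, 0 < t → (1 + r) * B t ≤ deriv B t * t := by
    intro r hr0 hr t ht
    have hev : ∀ᶠ s in nhdsWithin 0 (Set.Ioi 0),
        -((1 + r) * B s) ≤ deriv B t * t - (1 + r) * B t := by
      filter_upwards [Ioo_mem_nhdsGT_of_mem (Set.mem_Ico.2 ⟨le_refl (0:ℝ), ht⟩)] with s hs
      have hkey := keygen r hr s t hs.1 hs.2.le
      have hpos : 0 < deriv B s * s := mul_pos (hBpos s hs.1).2.1 hs.1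
      linarith
    have htend : Filter.Tendsto (fun s => -((1 + r) * B s)) (nhdsWithin 0 (Set.Ioi 0))
        (nhds (-((1 + r) * 0))) := (hBlim.const_mul (1 + r)).neg
    have := le_of_tendsto htend hev
    simp only [mul_zero, neg_zero] at this
    linarith
  constructor
  · -- part (i)
    intro p κ γ Γ hp hκ hγ hΓ hA t ht
    rcases eq_or_lt_of_le ht with h0 | ht0
    · simp [← h0, hB0]
    · have hr0 : 0 ≤ γ / Γ := (div_pos hγ hΓ).le
      have hr : ∀ x : ℝ, 0 < x → (γ / Γ) * deriv B x ≤ x * deriv (deriv B) x := by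
        intro x hx
        obtain ⟨h1, h2, h3, h4⟩ := hA x hx
        have hX : 0 < (κ + x) ^ (p - 2) := Real.rpow_pos_of_pos (by linarith [hκ.1]) _
        have hrΓ : γ / Γ * Γ = γ := div_mul_cancel₀ _ (ne_of_gt hΓ)
        have hb1 : γ / Γ * deriv B x ≤ γ / Γ * (Γ * (κ + x) ^ (p - 2) * x) :=
          mul_le_mul_of_nonneg_left h2 hr0
        have key1 : γ / Γ * (Γ * (κ + x) ^ (p - 2) * x) = γ * (κ + x) ^ (p - 2) * x := by
          field_simp
        have hb2 : γ * (κ + x) ^ (p - 2) * x ≤ x * deriv (deriv B) x := by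
          calc γ * (κ + x) ^ (p - 2) * x = x * (γ * (κ + x) ^ (p - 2)) := by ring
          _ ≤ x * deriv (deriv B) x := mul_le_mul_of_nonneg_left h3 hx.le
        linarith
      have := keylim (γ / Γ) hr0 hr t ht0
      linarith
  · -- part (ii)
    rintro ⟨hB3, hc2, -⟩ K hK
    set F := derivWithin B (Set.Ici 0) with hF
    have hFc : ContinuousOn F (Set.Ici 0) :=
      hB1.continuousOn_derivWithin (uniqueDiffOn_Ici 0) le_rfl
    have hFeq : ∀ u : ℝ, 0 < u → F u = deriv B u := by
      intro u hu
      exact derivWithin_of_mem_nhds (Filter.mem_of_superset (isOpen_Ioi.mem_nhds hu) hIoiIci)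
    set G := derivWithin F (Set.Ici 0) with hG
    have hF2 : ContDiffOn ℝ 2 F (Set.Ici 0) :=
      hB3.derivWithin (uniqueDiffOn_Ici 0) (by norm_num)
    have hGc : ContinuousOn G (Set.Ici 0) :=
      hF2.continuousOn_derivWithin (uniqueDiffOn_Ici 0) (by norm_num)
    have hFD : ∀ u : ℝ, 0 < u → HasDerivAt F (deriv (deriv B) u) u := by
      intro u hu
      apply (hDD u hu).congr_of_eventuallyEq
      filter_upwards [isOpen_Ioi.mem_nhds hu] with v hv
      exact hFeq v hv
    set c := iteratedDerivWithin 2 B (Set.Ici 0) 0 with hc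
    have hc0 : 0 < c := hc2
    have hG0 : c = G 0 := by
      rw [hc, hG]
      have h2 : iteratedDerivWithin 2 B (Set.Ici 0) 0 =
          derivWithin (iteratedDerivWithin 1 B (Set.Ici 0)) (Set.Ici 0) 0 :=
        congrFun iteratedDerivWithin_succ 0
      rw [h2]
      apply derivWithin_congr
      · intro y hy; exact congrFun iteratedDerivWithin_one y
      · exact congrFun iteratedDerivWithin_one 0
    have hcont : ContinuousWithinAt G (Set.Ici 0) 0 := hGc 0 Set.self_mem_Ici
    have hev : {u : ℝ | G u ∈ Set.Ioo (c/2) (3*c/2)} ∈ nhdsWithin 0 (Set.Ici 0) := by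
      apply hcont
      rw [← hG0]
      exact Ioo_mem_nhds (by linarith) (by linarith)
    obtain ⟨η0, hη0, hsub⟩ := mem_nhdsGE_iff_exists_Icc_subset.mp hev
    set η := min η0 K with hη_def
    have hη : 0 < η := lt_min hη0 hK
    have hηK : η ≤ K := min_le_right _ _
    have hGb : ∀ u ∈ Set.Icc (0:ℝ) η, c/2 ≤ G u ∧ G u ≤ 3*c/2 := by
      intro u hu
      have := hsub ⟨hu.1, hu.2.trans (min_le_left _ _)⟩
      exact ⟨this.1.le, this.2.le⟩
    have hGD : ∀ u : ℝ, 0 < u → G u = deriv (deriv B) u := by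
      intro u hu
      rw [hG, derivWithin_of_mem_nhds (Filter.mem_of_superset (isOpen_Ioi.mem_nhds hu) hIoiIci)]
      exact (hFD u hu).deriv
    -- step 1 : F u ≤ 3c/2 * u on [0, η]
    have hFle : ∀ u ∈ Set.Icc (0:ℝ) η, F u ≤ 3*c/2 * u := by
      intro u hu
      have h := mono_aux (f := fun v => 3*c/2 * v - F v) hu.1 ?_ ?_
      · simp only [mul_zero, hF, hB'0, sub_zero] at h
        linarith
      · exact (continuousOn_const.mul continuousOn_id).sub
          (hFc.mono fun x hx => hx.1)
      · intro x hx
        refine ⟨3*c/2 * 1 - deriv (deriv B) x, ?_, ?_⟩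
        · have hb := (hGb x ⟨hx.1.le, hx.2.le.trans hu.2⟩).2
          rw [hGD x hx.1] at hb
          linarith
        · exact ((hasDerivAt_id x).const_mul (3*c/2)).sub (hFD x hx.1)
    -- step 2 : F u * u - (4/3) B u ≥ 0 on [0, η]
    have hstep2 : ∀ u ∈ Set.Icc (0:ℝ) η, (1/3) * B u ≤ F u * u - B u := by
      intro u hu
      have h := mono_aux (f := fun v => F v * v - (4/3) * B v) hu.1 ?_ ?_
      · simp only [mul_zero, hB0, sub_zero] at h
        linarith
      · exact ((hFc.mono fun x hx => hx.1).mul continuousOn_id).sub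
          (continuousOn_const.mul (hBc.mono fun x hx => hx.1))
      · intro x hx
        refine ⟨deriv (deriv B) x * x + F x * 1 - (4/3) * deriv B x, ?_, ?_⟩
        · have hb := (hGb x ⟨hx.1.le, hx.2.le.trans hu.2⟩).1
          rw [hGD x hx.1] at hb
          have hle := hFle x ⟨hx.1.le, hx.2.le.trans hu.2⟩
          have heq := hFeq x hx.1
          have h5 : c/2 * x ≤ deriv (deriv B) x * x := mul_le_mul_of_nonneg_right hb hx.1.le
          linarith
        · exact (((hFD x hx.1).mul (hasDerivAt_id x)).sub ((hDB x hx.1).const_mul (4/3)))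
    -- step 3 : h is monotone on [η, K]
    have hmono : ∀ t ∈ Set.Icc η K, deriv B η * η - B η ≤ deriv B t * t - B t := by
      intro t htK
      have h := mono_aux (f := fun v => deriv B v * v - (1:ℝ) * B v) htK.1 ?_ ?_
      · simpa using h
      · have hsub : Set.Icc η t ⊆ Set.Ioi 0 := fun x hx => hη.trans_le hx.1
        exact ((hDc.mono hsub).mul continuousOn_id).sub
          (continuousOn_const.mul (hBc.mono fun x hx => (hη.trans_le hx.1).le))
      · intro x hx
        have hx0 : 0 < x := hη.trans hx.1
        refine ⟨deriv (deriv B) x * x + deriv B x * 1 - 1 * deriv B x, ?_, ?_⟩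
        · have := (hBpos x hx0).2.2
          nlinarith
        · exact (((hDD x hx0).mul (hasDerivAt_id x)).sub ((hDB x hx0).const_mul 1))
    -- step 4 : bound on B on [η, K]
    obtain ⟨x₀, hx₀, hmax⟩ := isCompact_Icc.exists_isMaxOn (Set.nonempty_Icc.2 hηK)
      (hBc.mono fun x hx => (hη.trans_le hx.1).le)
    set M := B x₀ with hM
    have hM0 : 0 < M := (hBpos x₀ (hη.trans_le hx₀.1)).1
    have hm : (1/3) * B η ≤ deriv B η * η - B η := by
      have := hstep2 η ⟨hη.le, le_rfl⟩
      rwa [hFeq η hη] at this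
    set m := (1/3) * B η with hm_def
    have hm0 : 0 < m := by
      have := (hBpos η hη).1
      rw [hm_def]; linarith
    refine ⟨min (1/3) (m / M), lt_min (by norm_num) (div_pos hm0 hM0), ?_⟩
    intro t htK
    have hBt : 0 ≤ B t := by
      rcases eq_or_lt_of_le htK.1 with h0 | h0
      · simp [← h0, hB0]
      · exact (hBpos t h0).1.le
    rcases le_or_gt t η with hcase | hcase
    · rcases eq_or_lt_of_le htK.1 with h0 | h0
      · simp [← h0, hB0]
      · have h2 := hstep2 t ⟨htK.1, hcase⟩
        rw [hFeq t h0] at h2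
        have : min (1/3) (m / M) * B t ≤ (1/3) * B t :=
          mul_le_mul_of_nonneg_right (min_le_left _ _) hBt
        linarith
    · have h3 := hmono t ⟨hcase.le, htK.2⟩
      have hBtM : B t ≤ M := hmax ⟨hcase.le, htK.2⟩
      have h4 : min (1/3) (m / M) * B t ≤ (m / M) * B t :=
        mul_le_mul_of_nonneg_right (min_le_right _ _) hBt
      have h5 : (m / M) * B t ≤ m := by
        rw [div_mul_eq_mul_div, div_le_iff₀ hM0]
        nlinarith
      linarith

end
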